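/- For every n ≥ 1 there is a partial proper edge coloring of two edges of C_{2n+1} □ K_2 using colors {1,2,3} that cannot be extended to a proper 3-edge coloring of C_{2n+1} □ K_2: namely, color two corresponding edges of the two copies of C_{2n+1} with colors 1 and 2 respectively. -/

import Mathlib

open SimpleGraph

variable {V : Type*}

/-- Two edges of `G` are adjacent if both are edges, they are distinct,
and they share a vertex. -/
def EdgeAdj (G : SimpleGraph V) (e f : Sym2 V) : Prop :=
  e ∈ G.edgeSet ∧ f ∈ G.edgeSet ∧ e ≠ f ∧ ∃ v, v ∈ e ∧ v ∈ f

/-- A proper edge coloring (with natural-number colors). -/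
def IsProperEdgeColoring (G : SimpleGraph V) (C : Sym2 V → ℕ) : Prop :=
  ∀ ⦃e f⦄, EdgeAdj G e f → C e ≠ C f

/-- A partial proper edge coloring: colored edges are edges of `G`, and
adjacent colored edges receive distinct colors. -/
def IsPartialProperEdgeColoring (G : SimpleGraph V) (φ : Sym2 V → Option ℕ) : Prop :=
  (∀ e, φ e ≠ none → e ∈ G.edgeSet) ∧
  ∀ ⦃e f⦄, EdgeAdj G e f → φ e ≠ none → φ e ≠ φ f

/-- The partial coloring uses colors from `{0, ..., t-1}`. -/
def UsesColors (φ : Sym2 V → Option ℕ) (t : ℕ) : Prop :=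
  ∀ e a, φ e = some a → a < t

/-- The (total) coloring uses colors from `{0, ..., t-1}` on all edges of `G`. -/
def ColorsBelow (G : SimpleGraph V) (C : Sym2 V → ℕ) (t : ℕ) : Prop :=
  ∀ e ∈ G.edgeSet, C e < t

/-- `C` agrees with the partial coloring `φ` on all precolored edges. -/
def ExtendsColoring (C : Sym2 V → ℕ) (φ : Sym2 V → Option ℕ) : Prop :=
  ∀ e a, φ e = some a → C e = a

/-- `φ` extends to a proper edge coloring of `G` with `t` colors. -/
def Extendable (G : SimpleGraph V) (φ : Sym2 V → Option ℕ) (t : ℕ) : Prop :=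
  ∃ C, IsProperEdgeColoring G C ∧ ColorsBelow G C t ∧ ExtendsColoring C φ

/-- The set of precolored edges of `φ`. -/
def Precolored (φ : Sym2 V → Option ℕ) : Set (Sym2 V) := {e | φ e ≠ none}

/-- The chromatic index: least `t` admitting a proper edge coloring with `t` colors. -/
noncomputable def chromaticIndex (G : SimpleGraph V) : ℕ :=
  sInf {t | ∃ C, IsProperEdgeColoring G C ∧ ColorsBelow G C t}

/-- A set of edges is independent (a matching) if no two distinct members share a vertex. -/
def IndependentEdges (S : Set (Sym2 V)) : Prop :=
  ∀ e ∈ S, ∀ f ∈ S, e ≠ f → ∀ v, v ∈ e → v ∉ f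

open Fin.NatCast Fin.CommRing in
lemma keylemma {N : ℕ} [NeZero N] (h3 : 3 ≤ N) (hodd : N % 2 = 1)
    (C : Sym2 (Fin N × Fin 2) → ℕ)
    (hC : IsProperEdgeColoring ((cycleGraph N).boxProd (⊤ : SimpleGraph (Fin 2))) C)
    (hB : ColorsBelow ((cycleGraph N).boxProd (⊤ : SimpleGraph (Fin 2))) C 3) :
    C s(((0:Fin N),(0:Fin 2)),((1:Fin N),(0:Fin 2)))
      = C s(((0:Fin N),(1:Fin 2)),((1:Fin N),(1:Fin 2))) := by
  haveI : NeZero N := ⟨by omega⟩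
  set G := (cycleGraph N).boxProd (⊤ : SimpleGraph (Fin 2)) with hG
  set a : Fin N → ℕ := fun i => C s((i,(0:Fin 2)),(i+1,(0:Fin 2))) with ha
  set b : Fin N → ℕ := fun i => C s((i,(1:Fin 2)),(i+1,(1:Fin 2))) with hb
  set m : Fin N → ℕ := fun i => C s((i,(0:Fin 2)),(i,(1:Fin 2))) with hm
  have v1 : ((1 : Fin N) : ℕ) = 1 := by
    rw [Fin.val_one', Nat.mod_eq_of_lt (by omega)]
  have v2 : ((2 : Fin N) : ℕ) = 2 := by
    have h : (2 : Fin N) = ((2 : ℕ) : Fin N) := by norm_cast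
    rw [h, Fin.val_natCast, Nat.mod_eq_of_lt (by omega)]
  have hne1 : ∀ i : Fin N, i ≠ i + 1 := by
    intro i h
    have : (1 : Fin N) = 0 := by
      have := (left_eq_add).mp h
      exact this
    apply_fun Fin.val at this
    rw [v1] at this; simp at this
  have hne2 : ∀ i : Fin N, i ≠ i + 1 + 1 := by
    intro i h
    rw [add_assoc] at h
    have : (2 : Fin N) = 0 := by
      have h2 := (left_eq_add).mp h
      rwa [one_add_one_eq_two] at h2
    apply_fun Fin.val at this
    rw [v2] at this; simp at this
  have hAdjC : ∀ i : Fin N, (cycleGraph N).Adj i (i + 1) := by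
    intro i
    rw [cycleGraph_adj']
    right
    rw [add_sub_cancel_left, v1]
  have key : ∀ (u v w : Fin N × Fin 2), G.Adj u v → G.Adj u w → v ≠ w →
      C s(u,v) ≠ C s(u,w) := by
    intro u v w h1 h2 hvw
    apply hC
    refine ⟨h1, h2, ?_, u, by simp, by simp⟩
    intro h
    rw [Sym2.congr_right] at h
    exact hvw h
  -- adjacency facts
  have adj1 : ∀ (i : Fin N) (j : Fin 2), G.Adj (i+1, j) (i, j) := by
    intro i j
    exact (SimpleGraph.boxProd_adj_left).mpr (hAdjC i).symm
  have adj2 : ∀ (i : Fin N) (j : Fin 2), G.Adj (i+1, j) (i+1+1, j) := by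
    intro i j
    exact (SimpleGraph.boxProd_adj_left).mpr (hAdjC (i+1))
  have adj3 : ∀ (i : Fin N), G.Adj (i+1, (0:Fin 2)) (i+1, (1:Fin 2)) := by
    intro i
    exact (SimpleGraph.boxProd_adj_right).mpr (by decide)
  have adj3' : ∀ (i : Fin N), G.Adj (i+1, (1:Fin 2)) (i+1, (0:Fin 2)) := fun i => (adj3 i).symm
  have swap1 : ∀ (i : Fin N) (j : Fin 2), C s((i+1,j),(i,j)) = C s((i,j),(i+1,j)) := by
    intro i j; rw [Sym2.eq_swap]
  have swap2 : ∀ (i : Fin N), C s((i+1,(1:Fin 2)),(i+1,(0:Fin 2))) = m (i+1) := by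
    intro i; rw [Sym2.eq_swap]
  -- the main per-index facts
  have main : ∀ i : Fin N,
      a i < 3 ∧ a (i+1) < 3 ∧ b i < 3 ∧ b (i+1) < 3 ∧ m (i+1) < 3 ∧
      a i ≠ a (i+1) ∧ b i ≠ b (i+1) ∧ a i ≠ m (i+1) ∧ a (i+1) ≠ m (i+1) ∧
      b i ≠ m (i+1) ∧ b (i+1) ≠ m (i+1) := by
    intro i
    have d1 : a i ≠ a (i+1) := by
      have := key (i+1, (0:Fin 2)) (i, 0) (i+1+1, 0) (adj1 i 0) (adj2 i 0)
        (by intro h; exact hne2 i ((Prod.ext_iff.mp h).1))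
      rwa [swap1] at this
    have d2 : b i ≠ b (i+1) := by
      have := key (i+1, (1:Fin 2)) (i, 1) (i+1+1, 1) (adj1 i 1) (adj2 i 1)
        (by intro h; exact hne2 i ((Prod.ext_iff.mp h).1))
      rwa [swap1] at this
    have d3 : a i ≠ m (i+1) := by
      have := key (i+1, (0:Fin 2)) (i, 0) (i+1, 1) (adj1 i 0) (adj3 i)
        (by intro h; simpa using (Prod.ext_iff.mp h).2)
      rwa [swap1] at this
    have d4 : a (i+1) ≠ m (i+1) := by
      exact key (i+1, (0:Fin 2)) (i+1+1, 0) (i+1, 1) (adj2 i 0) (adj3 i)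
        (by intro h; simpa using (Prod.ext_iff.mp h).2)
    have d5 : b i ≠ m (i+1) := by
      have := key (i+1, (1:Fin 2)) (i, 1) (i+1, 0) (adj1 i 1) (adj3' i)
        (by intro h; simpa using (Prod.ext_iff.mp h).2)
      rwa [swap1, swap2] at this
    have d6 : b (i+1) ≠ m (i+1) := by
      have := key (i+1, (1:Fin 2)) (i+1+1, 1) (i+1, 0) (adj2 i 1) (adj3' i)
        (by intro h; simpa using (Prod.ext_iff.mp h).2)
      rwa [swap2] at this
    have B1 : a i < 3 := hB _ ((adj1 i 0).symm)
    have B2 : a (i+1) < 3 := hB _ (adj2 i 0)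
    have B3 : b i < 3 := hB _ ((adj1 i 1).symm)
    have B4 : b (i+1) < 3 := hB _ (adj2 i 1)
    have B5 : m (i+1) < 3 := hB _ (adj3 i)
    exact ⟨B1, B2, B3, B4, B5, d1, d2, d3, d4, d5, d6⟩
  have step : ∀ i : Fin N, a i ≠ b i → a (i+1) ≠ b (i+1) ∧ a (i+1) = b i ∧ b (i+1) = a i := by
    intro i hne
    have := main i
    omega
  by_contra hcontra
  have h0 : a 0 ≠ b 0 := by
    simpa [ha, hb, zero_add] using hcontra
  have hk : ∀ k : ℕ, a (k : Fin N) ≠ b (k : Fin N) := by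
    intro k
    induction k with
    | zero => simpa using h0
    | succ k ih =>
      have := (step _ ih).1
      have hc : ((k+1 : ℕ) : Fin N) = (k : Fin N) + 1 := by push_cast; ring
      rwa [hc]
  have hall : ∀ i : Fin N, a i ≠ b i := by
    intro i
    have := hk i.val
    rwa [Fin.cast_val_eq_self] at this
  have per2 : ∀ i : Fin N, a (i + 2) = a i := by
    intro i
    have s1 := step i (hall i)
    have s2 := step (i+1) (hall (i+1))
    have h : i + 2 = i + 1 + 1 := by ring
    rw [h, s2.2.1, s1.2.2]
  have per2k : ∀ (k : ℕ) (i : Fin N), a (i + (2*k : ℕ)) = a i := by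
    intro k
    induction k with
    | zero => simp
    | succ k ih =>
      intro i
      have hc : ((2*(k+1) : ℕ) : Fin N) = ((2*k : ℕ) : Fin N) + 2 := by push_cast; ring
      rw [hc, ← add_assoc, per2, ih]
  have hfin : a 1 = a 0 := by
    have := per2k ((N+1)/2) 0
    have hc : ((2 * ((N+1)/2) : ℕ) : Fin N) = 1 := by
      have : 2 * ((N+1)/2) = N + 1 := by omega
      rw [this]
      push_cast
      simp
    rw [hc, zero_add] at this
    exact this
  have := (main 0).2.2.2.2.2.1
  rw [zero_add] at this
  exact this hfin.symm

theorem stmt18 (n : ℕ) (hn : 1 ≤ n) :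
    ∃ φ : Sym2 (Fin (2*n+1) × Fin 2) → Option ℕ,
      φ = (fun e =>
        if e = s(((0 : Fin (2*n+1)), (0 : Fin 2)), ((1 : Fin (2*n+1)), (0 : Fin 2))) then some 0
        else if e = s(((0 : Fin (2*n+1)), (1 : Fin 2)), ((1 : Fin (2*n+1)), (1 : Fin 2))) then some 1
        else none) ∧
      IsPartialProperEdgeColoring ((cycleGraph (2*n+1)).boxProd (⊤ : SimpleGraph (Fin 2))) φ ∧
      UsesColors φ 3 ∧ (Precolored φ).ncard = 2 ∧
      ¬ Extendable ((cycleGraph (2*n+1)).boxProd (⊤ : SimpleGraph (Fin 2))) φ 3 := by 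
  haveI : NeZero (2*n+1) := ⟨by omega⟩
  set e0 : Sym2 (Fin (2*n+1) × Fin 2) :=
    s(((0 : Fin (2*n+1)), (0 : Fin 2)), ((1 : Fin (2*n+1)), (0 : Fin 2))) with he0
  set e1 : Sym2 (Fin (2*n+1) × Fin 2) :=
    s(((0 : Fin (2*n+1)), (1 : Fin 2)), ((1 : Fin (2*n+1)), (1 : Fin 2))) with he1
  have hne01 : e0 ≠ e1 := by
    rw [he0, he1]
    simp [Sym2.eq_iff, Prod.ext_iff]
  have hv1 : ((1 : Fin (2*n+1)) : ℕ) = 1 := by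
    rw [Fin.val_one', Nat.mod_eq_of_lt (by omega)]
  have hadj01 : (cycleGraph (2*n+1)).Adj 0 1 := by
    rw [cycleGraph_adj']
    right
    rw [sub_zero, hv1]
  have mem0 : e0 ∈ ((cycleGraph (2*n+1)).boxProd (⊤ : SimpleGraph (Fin 2))).edgeSet := by
    rw [he0, SimpleGraph.mem_edgeSet]
    exact (SimpleGraph.boxProd_adj_left).mpr hadj01
  have mem1 : e1 ∈ ((cycleGraph (2*n+1)).boxProd (⊤ : SimpleGraph (Fin 2))).edgeSet := by
    rw [he1, SimpleGraph.mem_edgeSet]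
    exact (SimpleGraph.boxProd_adj_left).mpr hadj01
  refine ⟨fun e => if e = e0 then some 0 else if e = e1 then some 1 else none, rfl, ⟨?_, ?_⟩, ?_, ?_, ?_⟩
  · intro e he
    by_cases h0 : e = e0
    · subst h0; exact mem0
    · by_cases h1 : e = e1
      · subst h1; exact mem1
      · simp [h0, h1] at he
  · intro e f hadj he
    have hef : e ≠ f := hadj.2.2.1
    by_cases h0 : e = e0
    · subst h0
      by_cases hf0 : f = e0
      · exact absurd hf0.symm hef
      · by_cases hf1 : f = e1 <;> simp [hf0, hf1, hne01, Ne.symm hne01]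
    · by_cases h1 : e = e1
      · subst h1
        by_cases hf1 : f = e1
        · exact absurd hf1.symm hef
        · by_cases hf0 : f = e0 <;> simp [hf0, hf1, hne01, Ne.symm hne01]
      · simp [h0, h1] at he
  · intro e a h
    dsimp only at h
    split_ifs at h with h0 h1 <;> simp at h <;> omega
  · have hset : Precolored (fun e => if e = e0 then some 0 else if e = e1 then some 1 else none)
        = {e0, e1} := by
      ext x
      by_cases h0 : x = e0
      · simp [Precolored, h0]
      · by_cases h1 : x = e1 <;> simp [Precolored, h0, h1, Ne.symm hne01]
    rw [hset]
    exact Set.ncard_pair hne01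
  · rintro ⟨C, hC, hB, hE⟩
    have h0 : C e0 = 0 := hE e0 0 (by simp)
    have h1 : C e1 = 1 := hE e1 1 (by simp [Ne.symm hne01, hne01])
    have hk : C e0 = C e1 := keylemma (by omega) (by omega) C hC hB
    rw [h0, h1] at hk
    exact absurd hk (by omega)
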